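/- Let m and n be positive integers and let S ⊆ [m]×[n]. The set of points {(e_i, e_j) : (i,j) ∈ S} is an affine basis of the affine hull of the full vertex set {(e_i, e_j) : i ∈ [m], j ∈ [n]} of Δ_{m−1}×Δ_{n−1} (i.e., it is affinely independent and affinely spans this affine hull) if and only if the bipartite graph on vertex set [m] ⊔ [n] with edge set S is a spanning tree of the complete bipartite graph K_{[m],[n]}, that is, it is connected, contains no cycle, and every vertex of [m] ⊔ [n] is incident to an edge of S. -/

import Mathlib

/-- The point `(e_i, e_j)` of `Δ_{m-1} × Δ_{n-1} ⊆ ℝ^m × ℝ^n`. -/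
noncomputable def vtx (m n : ℕ) (p : Fin m × Fin n) : (Fin m → ℝ) × (Fin n → ℝ) :=
  (Pi.single p.1 1, Pi.single p.2 1)

/-- The bipartite graph on `[m] ⊔ [n]` with edge set `S`. -/
def bipGraph (m n : ℕ) (S : Finset (Fin m × Fin n)) : SimpleGraph (Fin m ⊕ Fin n) where
  Adj u v := (∃ p ∈ S, u = Sum.inl p.1 ∧ v = Sum.inr p.2) ∨
             (∃ p ∈ S, u = Sum.inr p.2 ∧ v = Sum.inl p.1)
  symm := by
    constructor
    rintro u v (⟨p, hp, rfl, rfl⟩ | ⟨p, hp, rfl, rfl⟩)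
    · exact Or.inr ⟨p, hp, rfl, rfl⟩
    · exact Or.inl ⟨p, hp, rfl, rfl⟩
  loopless := by
    constructor
    rintro u (⟨p, hp, h1, h2⟩ | ⟨p, hp, h1, h2⟩) <;> simp_all

namespace DyckAux

open SimpleGraph

variable {m n : ℕ} {S : Finset (Fin m × Fin n)}

lemma adj_inl_inr {a : Fin m} {b : Fin n} :
    (bipGraph m n S).Adj (Sum.inl a) (Sum.inr b) ↔ (a, b) ∈ S := by
  constructor
  · rintro (⟨p, hp, h1, h2⟩ | ⟨p, hp, h1, h2⟩)
    · cases Sum.inl.inj h1; cases Sum.inr.inj h2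
      simpa using hp
    · cases h1
  · intro h
    exact Or.inl ⟨(a, b), h, rfl, rfl⟩

/-! ### Linear functionals for cut arguments -/

/-- linear functional used for cut arguments -/
def cutFun (c : Fin m → ℝ) (d : Fin n → ℝ) :
    ((Fin m → ℝ) × (Fin n → ℝ)) →ₗ[ℝ] ℝ where
  toFun z := (∑ i, c i * z.1 i) - (∑ j, d j * z.2 j)
  map_add' x y := by
    simp only [Prod.fst_add, Pi.add_apply, Prod.snd_add, mul_add, Finset.sum_add_distrib]
    ring
  map_smul' r x := by
    simp only [Prod.smul_fst, Pi.smul_apply, Prod.smul_snd, smul_eq_mul, RingHom.id_apply,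
      Finset.mul_sum]
    rw [mul_sub, Finset.mul_sum, Finset.mul_sum]
    congr 1 <;> exact Finset.sum_congr rfl fun i _ => by ring

lemma cutFun_vtx (c : Fin m → ℝ) (d : Fin n → ℝ) (p : Fin m × Fin n) :
    cutFun c d (vtx m n p) = c p.1 - d p.2 := by
  simp [cutFun, vtx, Pi.single_apply, mul_ite]

lemma linear_eval_affineSpan (L : ((Fin m → ℝ) × (Fin n → ℝ)) →ₗ[ℝ] ℝ)
    {T : Set ((Fin m → ℝ) × (Fin n → ℝ))} (h0 : ∀ x ∈ T, L x = 0)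
    {x} (hx : x ∈ affineSpan ℝ T) : L x = 0 := by
  let Q : AffineSubspace ℝ ((Fin m → ℝ) × (Fin n → ℝ)) :=
    { carrier := {z | L z = 0}
      smul_vsub_vadd_mem' := by
        intro t p1 p2 p3 h1 h2 h3
        simp only [Set.mem_setOf_eq] at h1 h2 h3 ⊢
        simp [vsub_eq_sub, vadd_eq_add, map_add, map_smul, map_sub, h1, h2, h3] }
  exact (affineSpan_le (Q := Q)).2 h0 hx

lemma not_mem_span_cut (c : Fin m → ℝ) (d : Fin n → ℝ)
    (hS : ∀ p ∈ S, c p.1 = d p.2) {a : Fin m} {b : Fin n} (hab : c a ≠ d b) :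
    vtx m n (a, b) ∉ affineSpan ℝ (vtx m n '' (S : Set (Fin m × Fin n))) := by
  intro hmem
  have h0 : ∀ x ∈ vtx m n '' (S : Set (Fin m × Fin n)), cutFun c d x = 0 := by
    rintro x ⟨p, hp, rfl⟩
    rw [cutFun_vtx, hS p hp]; ring
  have := linear_eval_affineSpan (cutFun c d) h0 hmem
  rw [cutFun_vtx] at this
  exact hab (by linarith)

/-! ### Walks give affine span membership -/

lemma vtx_combo {i a : Fin m} {b j : Fin n} :
    (1:ℝ) • (vtx m n (i, b) -ᵥ vtx m n (a, b)) +ᵥ vtx m n (a, j) = vtx m n (i, j) := by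
  apply Prod.ext <;> simp [vtx, vsub_eq_sub, vadd_eq_add]

lemma mem_span_of_walk {u v : Fin m ⊕ Fin n} (W : (bipGraph m n S).Walk u v) :
    (∀ i j, u = Sum.inl i → v = Sum.inr j →
      vtx m n (i, j) ∈ affineSpan ℝ (vtx m n '' (S : Set (Fin m × Fin n)))) ∧
    (∀ b j i, u = Sum.inr b → v = Sum.inr j → (i, b) ∈ S →
      vtx m n (i, j) ∈ affineSpan ℝ (vtx m n '' (S : Set (Fin m × Fin n)))) := by
  induction W with
  | nil =>
    constructor
    · rintro i j rfl h
      cases h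
    · rintro b j i rfl h hib
      cases Sum.inr.inj h
      exact subset_affineSpan ℝ _ ⟨(i, b), hib, rfl⟩
  | @cons u w v h p ih =>
    constructor
    · rintro i j rfl hv
      rcases h with ⟨q, hq, h1, h2⟩ | ⟨q, hq, h1, h2⟩
      · cases Sum.inl.inj h1
        subst h2
        exact ih.2 q.2 j q.1 rfl hv hq
      · cases h1
    · rintro b j i rfl hv hib
      rcases h with ⟨q, hq, h1, h2⟩ | ⟨q, hq, h1, h2⟩
      · cases h1
      · cases Sum.inr.inj h1
        subst h2
        have h3 := ih.1 q.1 j rfl hv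
        have h1' : vtx m n (i, q.2) ∈ affineSpan ℝ (vtx m n '' (S : Set (Fin m × Fin n))) :=
          subset_affineSpan ℝ _ ⟨(i, q.2), hib, rfl⟩
        have h2' : vtx m n (q.1, q.2) ∈ affineSpan ℝ (vtx m n '' (S : Set (Fin m × Fin n))) :=
          subset_affineSpan ℝ _ ⟨q, hq, by simp⟩
        have := AffineSubspace.smul_vsub_vadd_mem _ (1:ℝ) h1' h2' h3
        rwa [vtx_combo] at this

/-! ### Flows along walks -/

def stepFlow (u v : Fin m ⊕ Fin n) (q : Fin m × Fin n) : ℤ :=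
  (if u = Sum.inl q.1 ∧ v = Sum.inr q.2 then 1 else 0) -
  (if u = Sum.inr q.2 ∧ v = Sum.inl q.1 then 1 else 0)

def wflow : ∀ {u v : Fin m ⊕ Fin n}, (bipGraph m n S).Walk u v → (Fin m × Fin n) → ℤ
  | _, _, .nil, _ => 0
  | u, _, .cons (v := w) _ p, q => stepFlow u w q + wflow p q

@[simp] lemma wflow_nil {u : Fin m ⊕ Fin n} (q) : wflow (S := S) (Walk.nil (u := u)) q = 0 := rfl

@[simp] lemma wflow_cons {u w v : Fin m ⊕ Fin n} (h : (bipGraph m n S).Adj u w)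
    (p : (bipGraph m n S).Walk w v) (q) :
    wflow (Walk.cons h p) q = stepFlow u w q + wflow p q := rfl

lemma stepFlow_support {u w : Fin m ⊕ Fin n} {q : Fin m × Fin n} (h : stepFlow u w q ≠ 0) :
    (u = Sum.inl q.1 ∧ w = Sum.inr q.2) ∨ (u = Sum.inr q.2 ∧ w = Sum.inl q.1) := by
  by_contra hc
  unfold stepFlow at h
  rw [if_neg (fun h' => hc (Or.inl h')), if_neg (fun h' => hc (Or.inr h'))] at h
  simp at h

lemma wflow_support {u v : Fin m ⊕ Fin n} (W : (bipGraph m n S).Walk u v) (q : Fin m × Fin n)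
    (h : wflow W q ≠ 0) : q ∈ S := by
  induction W with
  | nil => simp at h
  | @cons u w v hadj p ih =>
    rw [wflow_cons] at h
    by_cases h0 : wflow p q = 0
    · rw [h0, add_zero] at h
      have hsf := stepFlow_support h
      rcases hadj with ⟨r, hr, rfl, rfl⟩ | ⟨r, hr, rfl, rfl⟩
      · rcases hsf with ⟨h1, h2⟩ | ⟨h1, h2⟩
        · have : q = r := Prod.ext (Sum.inl.inj h1).symm (Sum.inr.inj h2).symm
          subst this; exact hr
        · cases h1
      · rcases hsf with ⟨h1, h2⟩ | ⟨h1, h2⟩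
        · cases h1
        · have : q = r := Prod.ext (Sum.inl.inj h2).symm (Sum.inr.inj h1).symm
          subst this; exact hr
    · exact ih h0

lemma stepFlow_row {u w : Fin m ⊕ Fin n} (h : (bipGraph m n S).Adj u w) (a : Fin m) :
    ∑ b, stepFlow u w (a, b) =
      (if u = Sum.inl a then 1 else 0) - (if w = Sum.inl a then 1 else 0) := by
  rcases h with ⟨r, hr, h1, h2⟩ | ⟨r, hr, h1, h2⟩ <;> subst h1 <;> subst h2 <;>
    simp [stepFlow, Sum.inl.injEq, Sum.inr.injEq, Finset.sum_sub_distrib] <;>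
    by_cases ha : r.1 = a <;> simp [ha, eq_comm, Finset.filter_eq']

lemma stepFlow_col {u w : Fin m ⊕ Fin n} (h : (bipGraph m n S).Adj u w) (b : Fin n) :
    ∑ a, stepFlow u w (a, b) =
      (if w = Sum.inr b then 1 else 0) - (if u = Sum.inr b then 1 else 0) := by
  rcases h with ⟨r, hr, h1, h2⟩ | ⟨r, hr, h1, h2⟩ <;> subst h1 <;> subst h2 <;>
    simp [stepFlow, Sum.inl.injEq, Sum.inr.injEq, Finset.sum_sub_distrib] <;>
    by_cases hb : r.2 = b <;> simp [hb, eq_comm, Finset.filter_eq']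

lemma wflow_row {u v : Fin m ⊕ Fin n} (W : (bipGraph m n S).Walk u v) (a : Fin m) :
    ∑ b, wflow W (a, b) =
      (if u = Sum.inl a then 1 else 0) - (if v = Sum.inl a then 1 else 0) := by
  induction W with
  | nil => simp
  | @cons u w v hadj p ih =>
    simp only [wflow_cons, Finset.sum_add_distrib, ih, stepFlow_row hadj]
    ring

lemma wflow_col {u v : Fin m ⊕ Fin n} (W : (bipGraph m n S).Walk u v) (b : Fin n) :
    ∑ a, wflow W (a, b) =
      (if v = Sum.inr b then 1 else 0) - (if u = Sum.inr b then 1 else 0) := by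
  induction W with
  | nil => simp
  | @cons u w v hadj p ih =>
    simp only [wflow_cons, Finset.sum_add_distrib, ih, stepFlow_col hadj]
    ring

lemma stepFlow_parity (u w : Fin m ⊕ Fin n) (q : Fin m × Fin n) :
    Even (stepFlow u w q + (if s(u, w) = s(Sum.inl q.1, Sum.inr q.2) then (1:ℤ) else 0)) := by
  by_cases h1 : u = Sum.inl q.1 ∧ w = Sum.inr q.2
  · obtain ⟨rfl, rfl⟩ := h1
    simp [stepFlow, Sym2.eq_iff]
  · by_cases h2 : u = Sum.inr q.2 ∧ w = Sum.inl q.1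
    · obtain ⟨rfl, rfl⟩ := h2
      simp [stepFlow, Sym2.eq_iff]
    · have hs : s(u, w) ≠ s(Sum.inl q.1, Sum.inr q.2) := by
        simp only [ne_eq, Sym2.eq_iff]; tauto
      simp [stepFlow, h1, h2, hs]

lemma wflow_parity {u v : Fin m ⊕ Fin n} (W : (bipGraph m n S).Walk u v) (q : Fin m × Fin n) :
    Even (wflow W q + (W.edges.count s(Sum.inl q.1, Sum.inr q.2) : ℤ)) := by
  induction W with
  | nil => simp
  | @cons u w v hadj p ih =>
    rw [wflow_cons, Walk.edges_cons, List.count_cons]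
    have h2 := ih.add (stepFlow_parity u w q)
    convert h2 using 1
    case e'_2 => rfl
    simp only [beq_iff_eq]
    push_cast
    split_ifs <;> ring

/-! ### Acyclic graphs support no nonzero flow -/

lemma not_reachable_erase (hac : (bipGraph m n S).IsAcyclic) {i : Fin m} {j : Fin n}
    (hij : (i, j) ∈ S) :
    ¬ (bipGraph m n (S.erase (i, j))).Reachable (Sum.inl i) (Sum.inr j) := by
  intro hr
  obtain ⟨w⟩ := hr
  have hle : bipGraph m n (S.erase (i, j)) ≤ bipGraph m n S := by
    rintro u v (⟨p, hp, h1, h2⟩ | ⟨p, hp, h1, h2⟩)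
    · exact Or.inl ⟨p, Finset.mem_of_mem_erase hp, h1, h2⟩
    · exact Or.inr ⟨p, Finset.mem_of_mem_erase hp, h1, h2⟩
  set p := w.toPath with hp
  have he : s(Sum.inl i, Sum.inr j) ∉ p.1.edges := by
    intro hmem
    have hadj := Walk.adj_of_mem_edges _ hmem
    rw [adj_inl_inr] at hadj
    simp at hadj
  have hp' : (p.1.mapLe hle).IsPath := (Walk.mapLe_isPath hle).2 p.2
  have he' : s(Sum.inr j, Sum.inl i) ∉ (p.1.mapLe hle).edges := by
    rw [Sym2.eq_swap]
    intro hmem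
    apply he
    simpa [Walk.mapLe, Walk.edges_map, Sym2.map_id'] using hmem
  have hadj : (bipGraph m n S).Adj (Sum.inr j) (Sum.inl i) := (adj_inl_inr.2 hij).symm
  exact hac _ (SimpleGraph.Path.cons_isCycle ⟨p.1.mapLe hle, hp'⟩ hadj he')

lemma flow_zero (hac : (bipGraph m n S).IsAcyclic) (W : Fin m × Fin n → ℝ)
    (hsupp : ∀ q, W q ≠ 0 → q ∈ S)
    (hrow : ∀ a, ∑ b, W (a, b) = 0) (hcol : ∀ b, ∑ a, W (a, b) = 0) :
    ∀ q, W q = 0 := by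
  classical
  rintro ⟨i, j⟩
  by_cases hW : W (i, j) = 0
  · exact hW
  exfalso
  have hij : (i, j) ∈ S := hsupp _ hW
  set C : Set (Fin m ⊕ Fin n) :=
    {v | (bipGraph m n (S.erase (i, j))).Reachable (Sum.inl i) v} with hC
  have hiC : Sum.inl i ∈ C := Reachable.refl _
  have hjC : Sum.inr j ∉ C := not_reachable_erase hac hij
  have hclosed : ∀ p ∈ S, p ≠ (i, j) → (Sum.inl p.1 ∈ C ↔ Sum.inr p.2 ∈ C) := by
    intro p hp hne
    have hadj : (bipGraph m n (S.erase (i, j))).Adj (Sum.inl p.1) (Sum.inr p.2) :=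
      adj_inl_inr.2 (Finset.mem_erase.2 ⟨hne, hp⟩)
    exact ⟨fun h => h.trans hadj.reachable, fun h => h.trans hadj.symm.reachable⟩
  have key : ∑ q : Fin m × Fin n,
      W q * ((if Sum.inl q.1 ∈ C then (1:ℝ) else 0) - (if Sum.inr q.2 ∈ C then 1 else 0)) =
      W (i, j) := by
    rw [Finset.sum_eq_single (i, j)]
    · simp [hiC, hjC]
    · intro q _ hne
      by_cases h0 : W q = 0
      · simp [h0]
      · have hiff := hclosed q (hsupp q h0) hne
        by_cases hc : Sum.inl q.1 ∈ C
        · simp [hc, hiff.1 hc]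
        · simp [hc, mt hiff.2 hc]
    · intro h
      exact absurd (Finset.mem_univ _) h
  have zero : ∑ q : Fin m × Fin n,
      W q * ((if Sum.inl q.1 ∈ C then (1:ℝ) else 0) - (if Sum.inr q.2 ∈ C then 1 else 0)) = 0 := by
    have e1 : ∑ q : Fin m × Fin n, W q * (if Sum.inl q.1 ∈ C then (1:ℝ) else 0) = 0 := by
      rw [Fintype.sum_prod_type]
      apply Finset.sum_eq_zero
      intro a _
      have hred : ∀ y : Fin n, (W (a, y) * if Sum.inl (a, y).1 ∈ C then (1:ℝ) else 0) =
          W (a, y) * (if Sum.inl a ∈ C then 1 else 0) := fun y => rfl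
      rw [Finset.sum_congr rfl fun y _ => hred y, ← Finset.sum_mul, hrow, zero_mul]
    have e2 : ∑ q : Fin m × Fin n, W q * (if Sum.inr q.2 ∈ C then (1:ℝ) else 0) = 0 := by
      rw [Fintype.sum_prod_type_right]
      apply Finset.sum_eq_zero
      intro b _
      have hred : ∀ x : Fin m, (W (x, b) * if Sum.inr (x, b).2 ∈ C then (1:ℝ) else 0) =
          W (x, b) * (if Sum.inr b ∈ C then 1 else 0) := fun x => rfl
      rw [Finset.sum_congr rfl fun x _ => hred x, ← Finset.sum_mul, hcol, zero_mul]
    simp_rw [mul_sub]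
    rw [Finset.sum_sub_distrib, e1, e2, sub_zero]
  rw [key] at zero
  exact hW zero

/-! ### Sums of weighted vertices, componentwise -/

lemma fst_apply_sum (Wt : Fin m × Fin n → ℝ) (a : Fin m) :
    (∑ q : Fin m × Fin n, Wt q • vtx m n q).1 a = ∑ b, Wt (a, b) := by
  classical
  rw [Prod.fst_sum, Finset.sum_apply]
  simp only [Prod.smul_fst, Pi.smul_apply, vtx, smul_eq_mul, Pi.single_apply,
    mul_ite, mul_one, mul_zero]
  rw [Fintype.sum_prod_type]
  have h1 : ∀ x, (∑ y, if a = x then Wt (x, y) else 0) =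
      if a = x then ∑ y, Wt (x, y) else 0 := fun x => by split_ifs <;> simp
  rw [Finset.sum_congr rfl fun x _ => h1 x, Finset.sum_ite_eq]
  simp

lemma snd_apply_sum (Wt : Fin m × Fin n → ℝ) (b : Fin n) :
    (∑ q : Fin m × Fin n, Wt q • vtx m n q).2 b = ∑ a, Wt (a, b) := by
  classical
  rw [Prod.snd_sum, Finset.sum_apply]
  simp only [Prod.smul_snd, Pi.smul_apply, vtx, smul_eq_mul, Pi.single_apply,
    mul_ite, mul_one, mul_zero]
  rw [Fintype.sum_prod_type_right]
  have h1 : ∀ x, (∑ y, if b = x then Wt (y, x) else 0) =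
      if b = x then ∑ y, Wt (y, x) else 0 := fun x => by split_ifs <;> simp
  rw [Finset.sum_congr rfl fun x _ => h1 x, Finset.sum_ite_eq]
  simp

end DyckAux

open DyckAux SimpleGraph

/-- The points `{(e_i, e_j) : (i,j) ∈ S}` form an affine basis of the affine hull
of the vertex set of `Δ_{m-1} × Δ_{n-1}` iff the bipartite graph with edge set `S`
is a spanning tree of `K_{[m],[n]}`: connected, acyclic and covering every vertex. -/
theorem dyckpaths_stmt2 (m n : ℕ) (hm : 0 < m) (hn : 0 < n)
    (S : Finset (Fin m × Fin n)) :
    (AffineIndependent ℝ (fun p : S => vtx m n (p : Fin m × Fin n)) ∧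
      affineSpan ℝ (vtx m n '' (S : Set (Fin m × Fin n))) =
        affineSpan ℝ (Set.range (vtx m n))) ↔
      ((bipGraph m n S).Connected ∧ (bipGraph m n S).IsAcyclic ∧
        (∀ i : Fin m, ∃ j : Fin n, (i, j) ∈ S) ∧
        (∀ j : Fin n, ∃ i : Fin m, (i, j) ∈ S)) := by
  classical
  constructor
  · rintro ⟨hind, hspan⟩
    have memspan : ∀ (a : Fin m) (b : Fin n),
        vtx m n (a, b) ∈ affineSpan ℝ (vtx m n '' (S : Set (Fin m × Fin n))) := by
      intro a b
      rw [hspan]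
      exact subset_affineSpan ℝ _ ⟨(a, b), rfl⟩
    have hcov1 : ∀ i : Fin m, ∃ j : Fin n, (i, j) ∈ S := by
      intro i
      by_contra hno
      push_neg at hno
      refine not_mem_span_cut (S := S) (fun a => if a = i then (1:ℝ) else 0) (fun _ => 0)
        ?_ (a := i) (b := ⟨0, hn⟩) ?_ (memspan _ _)
      · intro p hp
        have : p.1 ≠ i := by
          intro h
          exact hno p.2 (by rwa [← h, Prod.mk.eta])
        simp [this]
      · simp
    have hcov2 : ∀ j : Fin n, ∃ i : Fin m, (i, j) ∈ S := by
      intro j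
      by_contra hno
      push_neg at hno
      refine not_mem_span_cut (S := S) (fun _ => (0:ℝ)) (fun b => if b = j then 1 else 0)
        ?_ (a := ⟨0, hm⟩) (b := j) ?_ (memspan _ _)
      · intro p hp
        have : p.2 ≠ j := by
          intro h
          exact hno p.1 (by rwa [← h, Prod.mk.eta])
        simp [this]
      · simp
    have hac : (bipGraph m n S).IsAcyclic := by
      intro v c hc
      cases c with
      | nil => exact hc.ne_nil rfl
      | @cons _ w _ hadj p =>
        obtain ⟨q, hq, hedge⟩ : ∃ q ∈ S, s(v, w) = s(Sum.inl q.1, Sum.inr q.2) := by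
          have hadj' := hadj
          rcases hadj' with ⟨q, hq, h1, h2⟩ | ⟨q, hq, h1, h2⟩
          · subst h1; subst h2; exact ⟨q, hq, rfl⟩
          · subst h1; subst h2; exact ⟨q, hq, Sym2.eq_swap⟩
        set c' := Walk.cons hadj p with hc'
        set Wt : Fin m × Fin n → ℝ := fun r => ((wflow c' r : ℤ) : ℝ) with hWt
        have hrow : ∀ a, ∑ b, Wt (a, b) = 0 := by
          intro a
          have h0 := wflow_row c' a
          rw [sub_self] at h0
          simp [hWt, ← Int.cast_sum, h0]
        have hcol : ∀ b, ∑ a, Wt (a, b) = 0 := by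
          intro b
          have h0 := wflow_col c' b
          rw [sub_self] at h0
          simp [hWt, ← Int.cast_sum, h0]
        have hsupp : ∀ q', Wt q' ≠ 0 → q' ∈ S := by
          intro q' h
          exact wflow_support c' q' (fun hz => h (by simp [hWt, hz]))
        have hcount : c'.edges.count s(Sum.inl q.1, Sum.inr q.2) = 1 := by
          rw [← hedge]
          apply List.count_eq_one_of_mem hc.isTrail.edges_nodup
          rw [hc', Walk.edges_cons]
          exact List.mem_cons_self
        have hodd := wflow_parity c' q
        rw [hcount] at hodd
        have hne : wflow c' q ≠ 0 := by
          intro h0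
          rw [h0] at hodd
          norm_num at hodd
        have hz := affineIndependent_iff.1 hind Finset.univ (fun e => Wt e.val) ?_ ?_
          ⟨q, hq⟩ (Finset.mem_univ _)
        · have hz' : ((wflow c' q : ℤ) : ℝ) = 0 := hz
          exact hne (by exact_mod_cast hz')
        · calc ∑ e : {x // x ∈ S}, Wt e.val = ∑ q' ∈ S, Wt q' := Finset.sum_coe_sort S Wt
            _ = ∑ q' : Fin m × Fin n, Wt q' :=
              Finset.sum_subset (Finset.subset_univ S)
                (fun x _ hx => by by_contra h'; exact hx (hsupp x h'))
            _ = 0 := by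
              rw [Fintype.sum_prod_type]
              exact Finset.sum_eq_zero fun a _ => hrow a
        · calc ∑ e : {x // x ∈ S}, Wt e.val • vtx m n e.val
              = ∑ q' ∈ S, Wt q' • vtx m n q' :=
                Finset.sum_coe_sort S (fun q' => Wt q' • vtx m n q')
            _ = ∑ q' : Fin m × Fin n, Wt q' • vtx m n q' :=
              Finset.sum_subset (Finset.subset_univ S)
                (fun x _ hx => by
                  have : Wt x = 0 := by by_contra h'; exact hx (hsupp x h')
                  rw [this, zero_smul])
            _ = 0 := by
              apply Prod.ext
              · funext a
                rw [fst_apply_sum Wt a]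
                simpa using hrow a
              · funext b
                rw [snd_apply_sum Wt b]
                simpa using hcol b
    have hconn : (bipGraph m n S).Connected := by
      rw [connected_iff]
      refine ⟨?_, ⟨Sum.inl ⟨0, hm⟩⟩⟩
      intro u v
      by_contra hr
      set C : Set (Fin m ⊕ Fin n) := {x | (bipGraph m n S).Reachable u x} with hCdef
      have hu : u ∈ C := Reachable.refl u
      have hv : v ∉ C := hr
      have hclosed : ∀ p ∈ S, (Sum.inl p.1 ∈ C ↔ Sum.inr p.2 ∈ C) := fun p hp =>
        ⟨fun h => h.trans (adj_inl_inr.2 (by simpa using hp)).reachable,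
         fun h => h.trans (adj_inl_inr.2 (by simpa using hp)).symm.reachable⟩
      obtain ⟨a, b, hxor⟩ : ∃ a b, ¬(Sum.inl a ∈ C ↔ Sum.inr b ∈ C) := by
        rcases u with a | b <;> rcases v with a' | b'
        · obtain ⟨b', hb'⟩ := hcov1 a'
          exact ⟨a, b', fun hiff => hv ((hclosed _ hb').2 (hiff.1 hu))⟩
        · exact ⟨a, b', fun hiff => hv (hiff.1 hu)⟩
        · exact ⟨a', b, fun hiff => hv (hiff.2 hu)⟩
        · obtain ⟨a', ha'⟩ := hcov2 b'
          exact ⟨a', b, fun hiff => hv ((hclosed _ ha').1 (hiff.2 hu))⟩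
      refine not_mem_span_cut (S := S) (fun a' => if Sum.inl a' ∈ C then (1:ℝ) else 0)
        (fun b' => if Sum.inr b' ∈ C then (1:ℝ) else 0) ?_ (a := a) (b := b) ?_ (memspan a b)
      · intro p hp
        simp only [hclosed p hp]
      · by_cases h1 : Sum.inl a ∈ C <;> by_cases h2 : Sum.inr b ∈ C <;>
          simp [h1, h2] at hxor ⊢
    exact ⟨hconn, hac, hcov1, hcov2⟩
  · rintro ⟨hconn, hac, hcov1, hcov2⟩
    constructor
    · rw [affineIndependent_iff]
      intro s w hw hsum
      set Wt : Fin m × Fin n → ℝ := fun q =>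
        if h : q ∈ S then (if ⟨q, h⟩ ∈ s then w ⟨q, h⟩ else 0) else 0 with hWtdef
      have hWt_coe : ∀ e : {x // x ∈ S}, Wt e.val = if e ∈ s then w e else 0 := by
        rintro ⟨q, h⟩
        simp [hWtdef, h]
      have hfull : ∑ q : Fin m × Fin n, Wt q • vtx m n q = 0 := by
        calc ∑ q : Fin m × Fin n, Wt q • vtx m n q
            = ∑ q ∈ S, Wt q • vtx m n q :=
              (Finset.sum_subset (Finset.subset_univ S)
                (fun x _ hx => by simp [hWtdef, hx])).symm
          _ = ∑ e : {x // x ∈ S}, Wt e.val • vtx m n e.val := (Finset.sum_coe_sort S _).symm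
          _ = ∑ e ∈ s, w e • vtx m n e.val := by
              simp_rw [hWt_coe, ite_smul, zero_smul]
              rw [Finset.sum_ite_mem, Finset.univ_inter]
          _ = 0 := hsum
      have hrow : ∀ a, ∑ b, Wt (a, b) = 0 := by
        intro a
        rw [← fst_apply_sum Wt a, hfull]
        rfl
      have hcol : ∀ b, ∑ a, Wt (a, b) = 0 := by
        intro b
        rw [← snd_apply_sum Wt b, hfull]
        rfl
      have hz := flow_zero hac Wt
        (fun q h => by
          by_contra hq
          exact h (by simp [hWtdef, hq])) hrow hcol
      intro e he
      have h1 := hz e.val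
      rwa [hWt_coe, if_pos he] at h1
    · apply le_antisymm
      · exact affineSpan_mono ℝ (Set.image_subset_range _ _)
      · rw [affineSpan_le]
        rintro x ⟨⟨a, b⟩, rfl⟩
        obtain ⟨W⟩ := hconn.preconnected (Sum.inl a) (Sum.inr b)
        exact (mem_span_of_walk W).1 a b rfl rfl
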